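/- For every complex number z = x + iy and every positive integer n, |H_n(z)| ≤ 2^{n/2}·(n!)^{1/2}·e^{√(2n)·|z|}. -/

import Mathlib

open Complex Real

/-- Physicists' Hermite polynomial, as an entire function:
`H n z = (-1)^n e^{z^2} (d/dz)^n e^{-z^2}`. -/
noncomputable def hermiteH (n : ℕ) (z : ℂ) : ℂ :=
  (-1) ^ n * Complex.exp (z ^ 2) * iteratedDeriv n (fun w => Complex.exp (-w ^ 2)) z

/-- Normalized Hermite function
`ζ_n(z) = (π^{1/4} 2^{n/2} (n!)^{1/2})⁻¹ (-1)^n e^{-z²/2} H_n(z)`. -/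
noncomputable def zetaH (n : ℕ) (z : ℂ) : ℂ :=
  (((Real.pi ^ ((1 : ℝ) / 4) * 2 ^ ((n : ℝ) / 2) * Real.sqrt (n.factorial))⁻¹ : ℝ) : ℂ) *
    (-1) ^ n * Complex.exp (-z ^ 2 / 2) * hermiteH n z

open Polynomial in
lemma iteratedDeriv_gaussianC (n : ℕ) :
    iteratedDeriv n (fun w : ℂ => Complex.exp (-w ^ 2)) = fun z =>
      ((-1 : ℂ) ^ n * ((Real.sqrt 2 : ℝ) : ℂ) ^ n * aeval (((Real.sqrt 2 : ℝ) : ℂ) * z) (hermite n)) *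
        Complex.exp (-z ^ 2) := by
  induction n with
  | zero => funext z; simp
  | succ n ih =>
      rw [iteratedDeriv_succ, ih]
      funext z
      set s : ℂ := ((Real.sqrt 2 : ℝ) : ℂ) with hs
      have hs2 : s ^ 2 = 2 := by
        rw [hs, sq]
        norm_cast
        rw [← Real.sqrt_mul_self (by norm_num : (0:ℝ) ≤ 2)]
        norm_num
      have h1 : HasDerivAt (fun z : ℂ => aeval (s * z) (hermite n))
          (aeval (s * z) (derivative (hermite n)) * s) z := by
        have hinner : HasDerivAt (fun z : ℂ => s * z) s z := by
          simpa using (hasDerivAt_id z).const_mul s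
        exact (Polynomial.hasDerivAt_aeval (q := hermite n) (s * z)).comp z hinner
      have h2 : HasDerivAt (fun z : ℂ => Complex.exp (-z ^ 2))
          (-(2 * z) * Complex.exp (-z ^ 2)) z := by
        have := ((hasDerivAt_pow 2 z).neg).cexp
        simpa [mul_comm] using this
      have h3 := (h1.const_mul ((-1 : ℂ) ^ n * s ^ n)).mul h2
      rw [HasDerivAt.deriv (f := fun z => (-1 : ℂ) ^ n * s ^ n * aeval (s * z) (hermite n) * Complex.exp (-z ^ 2)) h3]
      rw [hermite_succ]
      simp only [map_sub, map_mul, aeval_X]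
      ring_nf
      rw [hs2]
      ring

open Polynomial in
lemma hermiteH_eq (n : ℕ) (z : ℂ) :
    hermiteH n z = ((Real.sqrt 2 : ℝ) : ℂ) ^ n * aeval (((Real.sqrt 2 : ℝ) : ℂ) * z) (hermite n) := by
  unfold hermiteH
  rw [iteratedDeriv_gaussianC]
  have he : Complex.exp (z ^ 2) * Complex.exp (-z ^ 2) = 1 := by
    rw [← Complex.exp_add]; simp
  have hsign : ((-1 : ℂ) ^ n) * ((-1 : ℂ) ^ n) = 1 := by
    rw [← pow_add, ← two_mul, pow_mul]
    norm_num
  calc (-1) ^ n * Complex.exp (z ^ 2) *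
        ((-1 : ℂ) ^ n * ((Real.sqrt 2 : ℝ) : ℂ) ^ n * aeval (((Real.sqrt 2 : ℝ) : ℂ) * z) (hermite n) *
          Complex.exp (-z ^ 2))
      = ((-1 : ℂ) ^ n * (-1 : ℂ) ^ n) * (Complex.exp (z ^ 2) * Complex.exp (-z ^ 2)) *
          (((Real.sqrt 2 : ℝ) : ℂ) ^ n * aeval (((Real.sqrt 2 : ℝ) : ℂ) * z) (hermite n)) := by ring
    _ = _ := by rw [he, hsign]; ring

lemma factorial_le_factorial_mul_pow (a b : ℕ) : (a + b).factorial ≤ a.factorial * (a + b) ^ b := by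
  induction b with
  | zero => simp
  | succ b ih =>
      have h1 : (a + (b + 1)).factorial = (a + b + 1) * (a + b).factorial := by
        rw [show a + (b + 1) = (a + b) + 1 by ring, Nat.factorial_succ]
      rw [h1]
      calc (a + b + 1) * (a + b).factorial ≤ (a + b + 1) * (a.factorial * (a + b) ^ b) :=
            Nat.mul_le_mul_left _ ih
        _ ≤ (a + (b + 1)) * (a.factorial * (a + (b + 1)) ^ b) := by
            apply Nat.mul_le_mul (by omega)
            exact Nat.mul_le_mul_left _ (Nat.pow_le_pow_left (by omega) b)
        _ = a.factorial * (a + (b + 1)) ^ (b + 1) := by ring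

open Nat in
lemma doubleFactorial_odd_le_even (j : ℕ) : (2 * j + 1)‼ ≤ (2 * j + 2)‼ := by
  induction j with
  | zero => simp [Nat.doubleFactorial]
  | succ j ih =>
      have e1 : (2 * (j + 1) + 1)‼ = (2 * j + 3) * (2 * j + 1)‼ := by
        rw [show 2 * (j + 1) + 1 = (2 * j + 1) + 2 by ring, Nat.doubleFactorial_add_two]
      have e2 : (2 * (j + 1) + 2)‼ = (2 * j + 4) * (2 * j + 2)‼ := by
        rw [show 2 * (j + 1) + 2 = (2 * j + 2) + 2 by ring, Nat.doubleFactorial_add_two]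
      rw [e1, e2]
      exact Nat.mul_le_mul (by omega) ih

open Nat in
lemma doubleFactorial_sq_le_factorial (m : ℕ) : ((2 * m - 1)‼) ^ 2 ≤ (2 * m).factorial := by
  cases m with
  | zero => simp [Nat.doubleFactorial]
  | succ j =>
      have h1 : 2 * (j + 1) - 1 = 2 * j + 1 := by omega
      have h2 : 2 * (j + 1) = (2 * j + 1) + 1 := by omega
      rw [h1, h2, Nat.factorial_eq_mul_doubleFactorial,
        show (2 * j + 1) + 1 = 2 * j + 2 by ring, pow_two]
      exact Nat.mul_le_mul (doubleFactorial_odd_le_even j) le_rfl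

open Nat in
lemma key_nat_ineq (m k : ℕ) :
    ((2 * m - 1)‼ * Nat.choose (2 * m + k) k * k.factorial) ^ 2 ≤
      (2 * m + k).factorial * (2 * m + k) ^ k := by
  set n := 2 * m + k with hn
  have hfac : Nat.choose n k * k.factorial * (2 * m).factorial = n.factorial := by
    have := Nat.choose_mul_factorial_mul_factorial (show k ≤ n by omega)
    rwa [show n - k = 2 * m by omega] at this
  have hD : ((2 * m - 1)‼) ^ 2 * n.factorial ≤ ((2 * m).factorial) ^ 2 * n ^ k := by
    calc ((2 * m - 1)‼) ^ 2 * n.factorial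
        ≤ ((2 * m - 1)‼) ^ 2 * ((2 * m).factorial * n ^ k) := by
          apply Nat.mul_le_mul_left
          exact factorial_le_factorial_mul_pow (2 * m) k
      _ ≤ (2 * m).factorial * ((2 * m).factorial * n ^ k) := by
          apply Nat.mul_le_mul_right
          exact doubleFactorial_sq_le_factorial m
      _ = ((2 * m).factorial) ^ 2 * n ^ k := by ring
  have hpos : 0 < ((2 * m).factorial) ^ 2 := pow_pos (Nat.factorial_pos _) _
  have expand : ((2 * m - 1)‼ * Nat.choose n k * k.factorial) ^ 2 * ((2 * m).factorial) ^ 2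
      = ((2 * m - 1)‼) ^ 2 * n.factorial * n.factorial := by
    calc ((2 * m - 1)‼ * Nat.choose n k * k.factorial) ^ 2 * ((2 * m).factorial) ^ 2
        = ((2 * m - 1)‼) ^ 2 * (Nat.choose n k * k.factorial * (2 * m).factorial) ^ 2 := by ring
      _ = ((2 * m - 1)‼) ^ 2 * n.factorial ^ 2 := by rw [hfac]
      _ = ((2 * m - 1)‼) ^ 2 * n.factorial * n.factorial := by ring
  have : ((2 * m - 1)‼ * Nat.choose n k * k.factorial) ^ 2 * ((2 * m).factorial) ^ 2 ≤
      (n.factorial * n ^ k) * ((2 * m).factorial) ^ 2 := by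
    rw [expand]
    calc ((2 * m - 1)‼) ^ 2 * n.factorial * n.factorial
        ≤ ((2 * m).factorial) ^ 2 * n ^ k * n.factorial := Nat.mul_le_mul_right _ hD
      _ = (n.factorial * n ^ k) * ((2 * m).factorial) ^ 2 := by ring
  exact Nat.le_of_mul_le_mul_right this hpos

open Polynomial Nat in
lemma coeff_hermite_bound (n k : ℕ) :
    (|((hermite n).coeff k : ℤ)| : ℝ) ≤
      Real.sqrt n.factorial * Real.sqrt n ^ k / k.factorial := by
  have hrhs : (0:ℝ) ≤ Real.sqrt n.factorial * Real.sqrt n ^ k / k.factorial := by positivity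
  rcases Nat.even_or_odd (n + k) with he | ho
  swap
  · rw [coeff_hermite_of_odd_add ho]; simpa using hrhs
  rcases lt_or_ge n k with hlt | hle
  · rw [coeff_hermite_of_lt hlt]; simpa using hrhs
  have h2 : Even (n - k) := by
    rw [Nat.even_sub hle]
    exact Nat.even_add.mp he
  obtain ⟨m, hm⟩ := h2
  have hnm : n = 2 * m + k := by omega
  subst hnm
  have habs : (|((hermite (2 * m + k)).coeff k : ℤ)| : ℝ)
      = (((2 * m - 1)‼ * Nat.choose (2 * m + k) k : ℕ) : ℝ) := by
    rw [coeff_hermite_explicit m k]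
    push_cast
    rw [_root_.abs_mul, _root_.abs_mul, _root_.abs_pow, _root_.abs_neg, _root_.abs_one,
      one_pow, one_mul, _root_.abs_of_nonneg (by positivity),
      _root_.abs_of_nonneg (by positivity)]
  rw [habs, le_div_iff₀ (by exact_mod_cast Nat.factorial_pos k : (0:ℝ) < k.factorial)]
  apply le_of_pow_le_pow_left₀ two_ne_zero (by positivity)
  have := key_nat_ineq m k
  calc ((((2 * m - 1)‼ * Nat.choose (2 * m + k) k : ℕ) : ℝ) * (k.factorial : ℕ)) ^ 2
      = ((((2 * m - 1)‼ * Nat.choose (2 * m + k) k * k.factorial) ^ 2 : ℕ) : ℝ) := by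
        push_cast; ring
    _ ≤ (((2 * m + k).factorial * (2 * m + k) ^ k : ℕ) : ℝ) := by exact_mod_cast this
    _ = (Real.sqrt ((2 * m + k).factorial : ℝ) * Real.sqrt ((2 * m + k : ℕ) : ℝ) ^ k) ^ 2 := by
        rw [mul_pow, Real.sq_sqrt (by positivity), ← pow_mul, mul_comm k 2, pow_mul,
          Real.sq_sqrt (by positivity)]
        push_cast
        ring

open Polynomial in
theorem hermiteH_eijndhoven_meyers_bound (z : ℂ) (n : ℕ) (hn : 1 ≤ n) :
    ‖hermiteH n z‖ ≤ 2 ^ ((n : ℝ) / 2) * Real.sqrt (n.factorial) *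
      Real.exp (Real.sqrt (2 * (n : ℝ)) * ‖z‖) := by
  have hx : (0:ℝ) ≤ Real.sqrt (2 * (n:ℝ)) * ‖z‖ := by positivity
  have hsn : ‖((Real.sqrt 2 : ℝ) : ℂ)‖ = Real.sqrt 2 := by
    rw [Complex.norm_real, Real.norm_eq_abs, _root_.abs_of_nonneg (Real.sqrt_nonneg 2)]
  have hsz : ‖((Real.sqrt 2 : ℝ) : ℂ) * z‖ = Real.sqrt 2 * ‖z‖ := by
    rw [norm_mul, hsn]
  have hpow : Real.sqrt 2 ^ n = (2:ℝ) ^ ((n:ℝ)/2) := by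
    rw [Real.sqrt_eq_rpow, ← Real.rpow_natCast ((2:ℝ) ^ ((1:ℝ)/2)) n,
      ← Real.rpow_mul (by norm_num : (0:ℝ) ≤ 2)]
    ring_nf
  rw [hermiteH_eq, Polynomial.aeval_eq_sum_range, natDegree_hermite]
  rw [norm_mul, norm_pow, hsn]
  have hsum : ‖∑ i ∈ Finset.range (n + 1),
      (hermite n).coeff i • (((Real.sqrt 2 : ℝ) : ℂ) * z) ^ i‖ ≤
      Real.sqrt n.factorial * Real.exp (Real.sqrt (2 * (n:ℝ)) * ‖z‖) := by
    calc ‖∑ i ∈ Finset.range (n + 1), (hermite n).coeff i • (((Real.sqrt 2 : ℝ) : ℂ) * z) ^ i‖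
        ≤ ∑ i ∈ Finset.range (n + 1),
            ‖(hermite n).coeff i • (((Real.sqrt 2 : ℝ) : ℂ) * z) ^ i‖ :=
          norm_sum_le _ _
      _ ≤ ∑ i ∈ Finset.range (n + 1),
            Real.sqrt n.factorial * (Real.sqrt (2 * (n:ℝ)) * ‖z‖) ^ i / i.factorial := by
          apply Finset.sum_le_sum
          intro i _
          rw [zsmul_eq_mul, norm_mul, norm_pow, hsz]
          have hc : ‖(((hermite n).coeff i : ℤ) : ℂ)‖ = (|(hermite n).coeff i| : ℝ) := by
            simp
          rw [hc]
          have hb := coeff_hermite_bound n i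
          calc (|(hermite n).coeff i| : ℝ) * (Real.sqrt 2 * ‖z‖) ^ i
              ≤ (Real.sqrt n.factorial * Real.sqrt n ^ i / i.factorial) *
                  (Real.sqrt 2 * ‖z‖) ^ i :=
                mul_le_mul_of_nonneg_right hb (by positivity)
            _ = Real.sqrt n.factorial * (Real.sqrt (2 * (n:ℝ)) * ‖z‖) ^ i / i.factorial := by
                rw [Real.sqrt_mul (by norm_num : (0:ℝ) ≤ 2)]
                ring
      _ = Real.sqrt n.factorial * ∑ i ∈ Finset.range (n + 1),
            (Real.sqrt (2 * (n:ℝ)) * ‖z‖) ^ i / i.factorial := by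
          rw [Finset.mul_sum]
          exact Finset.sum_congr rfl fun i _ => by ring
      _ ≤ Real.sqrt n.factorial * Real.exp (Real.sqrt (2 * (n:ℝ)) * ‖z‖) :=
          mul_le_mul_of_nonneg_left (Real.sum_le_exp_of_nonneg hx _) (Real.sqrt_nonneg _)
  calc Real.sqrt 2 ^ n * ‖∑ i ∈ Finset.range (n + 1),
        (hermite n).coeff i • (((Real.sqrt 2 : ℝ) : ℂ) * z) ^ i‖
      ≤ Real.sqrt 2 ^ n *
          (Real.sqrt n.factorial * Real.exp (Real.sqrt (2 * (n:ℝ)) * ‖z‖)) :=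
        mul_le_mul_of_nonneg_left hsum (by positivity)
    _ = 2 ^ ((n : ℝ) / 2) * Real.sqrt (n.factorial) *
          Real.exp (Real.sqrt (2 * (n : ℝ)) * ‖z‖) := by rw [hpow]; ring
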